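/- Let G be cyclic of prime order p, k a field of characteristic p, and V_{n} the indecomposable kG-module of dimension n ≥ 2 with dual basis x_1,…,x_n of V* satisfying σ(x_i) = x_i + x_{i+1} for i < n and σ(x_n) = x_n. Let N = Π_{k=0}^{p-1} σ^k(x_1) ∈ k[V]^G be the norm of x_1. Then the coefficient of x_1^p in N is 1, and k[V] decomposes as a kG-module direct sum k[V] = N·k[V] ⊕ B, where B is the span of monomials whose degree in x_1 is less than p. -/

import Mathlib

open MvPolynomial TensorProduct

/-- Index type for the variables of `k[V]` where `V = ⊕_{j<m} V_{nj j}`. -/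
abbrev Idx (m : ℕ) (nj : Fin m → ℕ) := Σ j : Fin m, Fin (nj j)

/-- The action of the generator σ on `k[V]`:
`σ (x_{i,j}) = x_{i,j} + x_{i+1,j}` (and `σ` fixes the last variable of each block). -/
noncomputable def sigmaAct (k : Type*) [CommRing k] {m : ℕ} (nj : Fin m → ℕ) :
    MvPolynomial (Idx m nj) k →ₐ[k] MvPolynomial (Idx m nj) k :=
  aeval (fun v => X v + if h : v.2.1 + 1 < nj v.1 then X ⟨v.1, ⟨v.2.1 + 1, h⟩⟩ else 0)

/-- Δ = σ - 1 as a `k`-linear endomorphism of `k[V]`. -/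
noncomputable def Del (k : Type*) [CommRing k] {m : ℕ} (nj : Fin m → ℕ) :
    MvPolynomial (Idx m nj) k →ₗ[k] MvPolynomial (Idx m nj) k :=
  (sigmaAct k nj).toLinearMap - LinearMap.id

/-- The ring of invariants `k[V]^G` (fixed points of the generator σ). -/
noncomputable def invar (k : Type*) [CommRing k] {m : ℕ} (nj : Fin m → ℕ) :
    Subalgebra k (MvPolynomial (Idx m nj) k) :=
  AlgHom.equalizer (sigmaAct k nj) (AlgHom.id k _)

/-- Matrix of σ on the indecomposable module `W = V_n` in the basis `w_1,…,w_n`,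
with `σ • w_i = ∑_{j ≤ i} (-1)^{i-j} w_j`. -/
def sigmaWMat (k : Type*) [CommRing k] (n : ℕ) : Matrix (Fin n) (Fin n) k :=
  fun a b => if a ≤ b then (-1 : k) ^ ((b : ℕ) - (a : ℕ)) else 0

/-- σ acting on `W = V_n`. -/
noncomputable def sigmaW (k : Type*) [CommRing k] (n : ℕ) : (Fin n → k) →ₗ[k] (Fin n → k) :=
  Matrix.toLin' (sigmaWMat k n)

/-- σ acting diagonally on `k[V] ⊗ W`. -/
noncomputable def sigmaCov (k : Type*) [CommRing k] {m : ℕ} (nj : Fin m → ℕ) (n : ℕ) :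
    (MvPolynomial (Idx m nj) k ⊗[k] (Fin n → k)) →ₗ[k]
      (MvPolynomial (Idx m nj) k ⊗[k] (Fin n → k)) :=
  TensorProduct.map (sigmaAct k nj).toLinearMap (sigmaW k n)

/-- A covariant is a `G`-invariant element of `k[V] ⊗ W`. -/
def IsCovariant (k : Type*) [CommRing k] {m : ℕ} (nj : Fin m → ℕ) {n : ℕ}
    (h : MvPolynomial (Idx m nj) k ⊗[k] (Fin n → k)) : Prop :=
  sigmaCov k nj n h = h

/-- Elements of `k[V] ⊗ W` which are homogeneous of degree `d`. -/
def tensorHomog (k : Type*) [CommRing k] {m : ℕ} (nj : Fin m → ℕ) (n : ℕ) (d : ℕ) :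
    Set (MvPolynomial (Idx m nj) k ⊗[k] (Fin n → k)) :=
  {x | x ∈ Submodule.span k
    {y | ∃ f w, MvPolynomial.IsHomogeneous f d ∧ y = f ⊗ₜ[k] w}}


/-- `h` is decomposable: it lies in `k[V]^G_+ ⋅ (k[V] ⊗ W)^G`. -/
def IsDecomposableCov (k : Type*) [CommRing k] {m : ℕ} (nj : Fin m → ℕ) (n : ℕ)
    (h : MvPolynomial (Idx m nj) k ⊗[k] (Fin n → k)) : Prop :=
  h ∈ Submodule.span k
    {y | ∃ q x, q ∈ invar k nj ∧ (∃ e, 0 < e ∧ MvPolynomial.IsHomogeneous q e) ∧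
      IsCovariant k nj x ∧ y = q • x}

/-- A transfer covariant: `Δ^k(f) w_1 + Δ^{k+1}(f) w_2 + ⋯ + Δ^{p-1}(f) w_s`. -/
noncomputable def transferCov (k : Type*) [CommRing k] {m : ℕ} (nj : Fin m → ℕ) (n : ℕ)
    (p s : ℕ) (f : MvPolynomial (Idx m nj) k) :
    MvPolynomial (Idx m nj) k ⊗[k] (Fin n → k) :=
  ∑ i : Fin n, (if (i : ℕ) < s then ((Del k nj) ^ (p - s + (i : ℕ))) f else 0) ⊗ₜ[k]
    Pi.single i 1

def IsTransferCovariant (k : Type*) [CommRing k] {m : ℕ} (nj : Fin m → ℕ) (n : ℕ) (p : ℕ)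
    (h : MvPolynomial (Idx m nj) k ⊗[k] (Fin n → k)) : Prop :=
  ∃ f s, 0 < s ∧ s ≤ n ∧ s ≤ p ∧ h = transferCov k nj n p s f

/-- The module of covariants is generated over `k[V]^G` in degrees ≤ d. -/
def CovGenLE (k : Type*) [CommRing k] {m : ℕ} (nj : Fin m → ℕ) (n : ℕ) (d : ℕ) : Prop :=
  ∀ x, IsCovariant k nj x → x ∈ Submodule.span k
    {y | ∃ q z, q ∈ invar k nj ∧ IsCovariant k nj z ∧
      (∃ e ≤ d, z ∈ tensorHomog k nj n e) ∧ y = q • z}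

/-- `k[V]` is generated as a `k[V]^G`-module in degrees ≤ d. -/
def PolyGenLE (k : Type*) [CommRing k] {m : ℕ} (nj : Fin m → ℕ) (d : ℕ) : Prop :=
  ∀ f : MvPolynomial (Idx m nj) k, f ∈ Submodule.span k
    {y | ∃ q g, q ∈ invar k nj ∧ (∃ e ≤ d, MvPolynomial.IsHomogeneous g e) ∧ y = q * g}

/-- `k[V]^G` is generated as a `k`-algebra in degrees ≤ d. -/
def AlgGenLE (k : Type*) [CommRing k] {m : ℕ} (nj : Fin m → ℕ) (d : ℕ) : Prop :=
  ∀ f ∈ invar k nj, f ∈ Algebra.adjoin k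
    {g | g ∈ invar k nj ∧ ∃ e ≤ d, MvPolynomial.IsHomogeneous g e}

/-- Noether bound of the module of covariants over `k[V]^G`. -/
noncomputable def betaCov (k : Type*) [CommRing k] {m : ℕ} (nj : Fin m → ℕ) (n : ℕ) : ℕ :=
  sInf {d | CovGenLE k nj n d}

noncomputable def betaPolyMod (k : Type*) [CommRing k] {m : ℕ} (nj : Fin m → ℕ) : ℕ :=
  sInf {d | PolyGenLE k nj d}

noncomputable def betaAlg (k : Type*) [CommRing k] {m : ℕ} (nj : Fin m → ℕ) : ℕ :=
  sInf {d | AlgGenLE k nj d}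

/-- The norm `N_j = ∏_{i=0}^{p-1} σ^i (x_{1,j})`. -/
noncomputable def normJ (k : Type*) [CommRing k] {m : ℕ} (nj : Fin m → ℕ) (p : ℕ)
    (j : Fin m) (h0 : 0 < nj j) : MvPolynomial (Idx m nj) k :=
  ∏ i ∈ Finset.range p, (sigmaAct k nj)^[i] (X ⟨j, ⟨0, h0⟩⟩)


namespace Stmt6Aux

variable {k : Type*} [CommRing k] {τ : Type*}

/-- Submodule of polynomials all of whose monomials have degree `< t` in the variable `v`. -/
def degLT (k : Type*) [CommRing k] {τ : Type*} (v : τ) (t : ℕ) :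
    Submodule k (MvPolynomial τ k) where
  carrier := {f | ∀ s ∈ f.support, s v < t}
  add_mem' := by
    classical
    intro f g hf hg s hs
    rcases Finset.mem_union.1 (MvPolynomial.support_add hs) with h | h
    · exact hf s h
    · exact hg s h
  zero_mem' := by intro s hs; simp at hs
  smul_mem' := by
    intro c f hf s hs
    exact hf s (MvPolynomial.support_smul hs)

lemma mem_degLT {v : τ} {t : ℕ} {f : MvPolynomial τ k} :
    f ∈ degLT k v t ↔ ∀ s ∈ f.support, s v < t := Iff.rfl

lemma degLT_mono {v : τ} {a b : ℕ} (h : a ≤ b) : degLT k v a ≤ degLT k v b :=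
  fun f hf s hs => lt_of_lt_of_le (hf s hs) h

lemma monomial_mem_degLT {v : τ} {t : ℕ} {s : τ →₀ ℕ} (c : k) (h : s v < t) :
    monomial s c ∈ degLT k v t := by
  intro s' hs'
  classical
  have := MvPolynomial.support_monomial_subset hs'
  simp only [Finset.mem_singleton] at this
  subst this; exact h

lemma mul_mem_degLT {v : τ} {a b : ℕ} {f g : MvPolynomial τ k}
    (hf : f ∈ degLT k v a) (hg : g ∈ degLT k v (b + 1)) : f * g ∈ degLT k v (a + b) := by
  classical
  intro s hs
  rcases Finset.mem_add.1 (MvPolynomial.support_mul f g hs) with ⟨s1, h1, s2, h2, rfl⟩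
  have := hf s1 h1
  have := hg s2 h2
  simp only [Finsupp.add_apply]
  omega

lemma pow_mem_degLT {v : τ} {a e : ℕ} {f : MvPolynomial τ k}
    (hf : f ∈ degLT k v (a + 1)) : f ^ e ∈ degLT k v (a * e + 1) := by
  induction e with
  | zero => simpa using monomial_mem_degLT (1 : k) (t := 1) (s := 0) (v := v) (by simp)
  | succ e ih =>
      have := mul_mem_degLT ih hf
      have he : a * e + 1 + a = a * (e + 1) + 1 := by ring
      rw [he] at this
      exact (pow_succ f e) ▸ this

lemma prod_mem_degLT {ι : Type*} {v : τ} (t : Finset ι) (F : ι → MvPolynomial τ k)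
    (a : ι → ℕ) (h : ∀ i ∈ t, F i ∈ degLT k v (a i + 1)) :
    (∏ i ∈ t, F i) ∈ degLT k v ((∑ i ∈ t, a i) + 1) := by
  classical
  induction t using Finset.induction_on with
  | empty => simpa using monomial_mem_degLT (1 : k) (t := 1) (s := 0) (v := v) (by simp)
  | @insert x t' hx ih =>
      rw [Finset.prod_insert hx, Finset.sum_insert hx]
      have h1 := h x (Finset.mem_insert_self _ _)
      have h2 := ih (fun i hi => h i (Finset.mem_insert_of_mem hi))
      have := mul_mem_degLT h1 h2
      have he : a x + 1 + ∑ i ∈ t', a i = (a x + ∑ i ∈ t', a i) + 1 := by ring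
      rwa [he] at this

lemma X_mem_degLT_two {v : τ} : (X v : MvPolynomial τ k) ∈ degLT k v 2 := by
  rw [← pow_one (X v : MvPolynomial τ k), X_pow_eq_monomial]
  exact monomial_mem_degLT _ (by simp)

lemma X_mem_degLT_one {v w : τ} (h : w ≠ v) : (X w : MvPolynomial τ k) ∈ degLT k v 1 := by
  rw [← pow_one (X w : MvPolynomial τ k), X_pow_eq_monomial]
  exact monomial_mem_degLT _ (by rw [Finsupp.single_eq_of_ne' h]; omega)

lemma prod_sub_pow_mem (v : τ) (m : ℕ) (F : ℕ → MvPolynomial τ k)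
    (hF : ∀ i, F i - X v ∈ degLT k v 1) :
    (∏ i ∈ Finset.range m, F i) - X v ^ m ∈ degLT k v m := by
  induction m with
  | zero => simpa using Submodule.zero_mem _
  | succ m ih =>
    have e : (∏ i ∈ Finset.range (m+1), F i) - X v ^ (m+1)
        = X v ^ m * (F m - X v) + ((∏ i ∈ Finset.range m, F i) - X v ^ m) * X v
          + ((∏ i ∈ Finset.range m, F i) - X v ^ m) * (F m - X v) := by
      rw [Finset.prod_range_succ]; ring
    rw [e]
    refine Submodule.add_mem _ (Submodule.add_mem _ ?_ ?_) ?_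
    · have hx : (X v : MvPolynomial τ k) ^ m ∈ degLT k v (m + 1) := by
        rw [X_pow_eq_monomial]; exact monomial_mem_degLT _ (by simp)
      simpa using mul_mem_degLT hx (hF m)
    · exact mul_mem_degLT ih (X_mem_degLT_two (v := v))
    · refine degLT_mono (a := m) (by omega) ?_
      simpa using mul_mem_degLT ih (hF m)

/-! ### Specific lemmas about `sigmaAct` on `V_n` -/

noncomputable def Xv (k : Type*) [CommRing k] (n : ℕ) (j : ℕ) :
    MvPolynomial (Idx 1 (fun _ => n)) k :=
  if h : j < n then X ⟨0, ⟨j, h⟩⟩ else 0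

variable {n : ℕ}

lemma sigma_Xv (j : ℕ) :
    sigmaAct k (fun _ => n) (Xv k n j) = Xv k n j + Xv k n (j + 1) := by
  by_cases h : j < n
  · rw [Xv, dif_pos h, sigmaAct, aeval_X]
    congr 1
  · have h2 : ¬ (j + 1 < n) := by omega
    simp [Xv, h, h2]

lemma iterate_sigma_Xv (i : ℕ) :
    (sigmaAct k (fun _ => n))^[i] (Xv k n 0) =
      ∑ j ∈ Finset.range (i + 1), (Nat.choose i j : k) • Xv k n j := by
  induction i with
  | zero => simp
  | succ i ih =>
    rw [Function.iterate_succ_apply', ih, map_sum]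
    simp only [map_smul, sigma_Xv, smul_add]
    rw [Finset.sum_add_distrib]
    have hA : ∑ j ∈ Finset.range (i+1), (i.choose j : k) • Xv k n j
        = ∑ j ∈ Finset.range (i+1), (i.choose (j+1) : k) • Xv k n (j+1) + Xv k n 0 := by
      have h1 := Finset.sum_range_succ (fun j => (i.choose j : k) • Xv k n j) (i+1)
      have h2 := Finset.sum_range_succ' (fun j => (i.choose j : k) • Xv k n j) (i+1)
      rw [Nat.choose_succ_self] at h1
      simp only [Nat.cast_zero, zero_smul, add_zero, Nat.choose_zero_right, Nat.cast_one,
        one_smul] at h1 h2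
      rw [← h1, h2]
    rw [hA]
    conv_rhs => rw [Finset.sum_range_succ']
    simp only [Nat.choose_succ_succ, Nat.cast_add, add_smul, Nat.choose_zero_right, Nat.cast_one,
      one_smul]
    rw [Finset.sum_add_distrib]
    abel

lemma Xv_mem (h0 : 0 < n) {j : ℕ} (hj : j ≠ 0) :
    Xv k n j ∈ degLT k (⟨0, ⟨0, h0⟩⟩ : Idx 1 fun _ => n) 1 := by
  rw [Xv]
  split_ifs with h
  · refine X_mem_degLT_one ?_
    intro hEq
    exact hj (congrArg (fun w : Idx 1 (fun _ => n) => (w.2 : ℕ)) hEq)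
  · exact Submodule.zero_mem _

end Stmt6Aux


/-- For the indecomposable module `V_n` (n ≥ 2) with variables
`x_1, …, x_n` and norm `N = ∏_{k=0}^{p-1} σ^k(x_1)`: the coefficient of `x_1^p` in
`N` is `1`, and `k[V] = N·k[V] ⊕ B` as `kG`-modules, where `B` is the span of the
monomials of `x_1`-degree `< p`. -/
theorem stmt6 (p : ℕ) (hp : p.Prime) (k : Type*) [Field k] [CharP k p]
    (n : ℕ) (hn : 2 ≤ n) (hnp : n ≤ p) :
    letI nj : Fin 1 → ℕ := fun _ => n
    let x1 : Idx 1 nj := ⟨0, ⟨0, (by omega : 0 < n)⟩⟩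
    let N : MvPolynomial (Idx 1 nj) k := normJ k nj p 0 (by omega : 0 < n)
    let NR : Submodule k (MvPolynomial (Idx 1 nj) k) :=
      LinearMap.range (LinearMap.mulLeft k N)
    let B : Submodule k (MvPolynomial (Idx 1 nj) k) :=
      Submodule.span k {g | ∃ s : Idx 1 nj →₀ ℕ, s x1 < p ∧ g = MvPolynomial.monomial s 1}
    MvPolynomial.coeff (Finsupp.single x1 p) N = 1 ∧
    IsCompl NR B ∧
    (∀ g ∈ NR, sigmaAct k nj g ∈ NR) ∧
    (∀ g ∈ B, sigmaAct k nj g ∈ B) := by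
  intro x1 N NR B
  let nj : Fin 1 → ℕ := fun _ => n
  classical
  have h0 : 0 < n := by omega
  have hp2 : 2 ≤ p := hp.two_le
  have hXv0 : Stmt6Aux.Xv k n 0 = (X x1 : MvPolynomial (Idx 1 nj) k) := by
    rw [Stmt6Aux.Xv, dif_pos h0]
  have hNdef : N = ∏ i ∈ Finset.range p, (sigmaAct k nj)^[i] (X x1) := rfl
  -- each factor is `X x1` plus something of `x1`-degree `0`
  have hfac : ∀ i, (sigmaAct k nj)^[i] (X x1) - X x1 ∈ Stmt6Aux.degLT k x1 1 := by
    intro i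
    rw [← hXv0, Stmt6Aux.iterate_sigma_Xv, Finset.sum_range_succ']
    simp only [Nat.choose_zero_right, Nat.cast_one, one_smul]
    rw [add_sub_cancel_right]
    exact Submodule.sum_mem _ fun j _ =>
      Submodule.smul_mem _ _ (Stmt6Aux.Xv_mem h0 (Nat.succ_ne_zero j))
  have hNsplit : N - X x1 ^ p ∈ Stmt6Aux.degLT k x1 p := by
    rw [hNdef]
    refine Stmt6Aux.prod_sub_pow_mem x1 p _ hfac
  -- σ^[p] x1 = x1
  have hFp : (sigmaAct k nj)^[p] (X x1) = X x1 := by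
    rw [← hXv0, Stmt6Aux.iterate_sigma_Xv]
    have e : ∑ j ∈ Finset.range (p+1), (p.choose j : k) • Stmt6Aux.Xv k n j
        = (p.choose 0 : k) • Stmt6Aux.Xv k n 0 := by
      refine Finset.sum_eq_single 0 ?_ ?_
      · intro j hj hj0
        rcases eq_or_lt_of_le (Nat.lt_succ_iff.1 (Finset.mem_range.1 hj)) with h | h
        · have hz : Stmt6Aux.Xv k n j = 0 := by
            rw [Stmt6Aux.Xv, dif_neg (by omega)]
          rw [hz, smul_zero]
        · have hz : (p.choose j : k) = 0 := by
            rw [CharP.cast_eq_zero_iff k p]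
            exact Nat.Prime.dvd_choose_self hp hj0 h
          rw [hz, zero_smul]
      · intro h; exact absurd (Finset.mem_range.2 (by omega)) h
    rw [e]; simp
  -- σ N = N
  have hx1ne : (X x1 : MvPolynomial (Idx 1 nj) k) ≠ 0 := MvPolynomial.X_ne_zero _
  have hσN : sigmaAct k nj N = N := by
    have h1 : sigmaAct k nj N = ∏ i ∈ Finset.range p, (sigmaAct k nj)^[i+1] (X x1) := by
      rw [hNdef, map_prod]
      exact Finset.prod_congr rfl fun i _ => (Function.iterate_succ_apply' _ _ _).symm
    have e1 : ∏ i ∈ Finset.range (p+1), (sigmaAct k nj)^[i] (X x1)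
        = (∏ i ∈ Finset.range p, (sigmaAct k nj)^[i+1] (X x1)) * X x1 := by
      rw [Finset.prod_range_succ']
      simp only [Function.iterate_zero_apply]
    have e2 : ∏ i ∈ Finset.range (p+1), (sigmaAct k nj)^[i] (X x1) = N * X x1 := by
      rw [Finset.prod_range_succ, hFp, hNdef]
    exact h1.trans (mul_right_cancel₀ hx1ne (e1.symm.trans e2))
  -- the coefficient claim
  have hcoeff : coeff (Finsupp.single x1 p) N = 1 := by
    have e : N = X x1 ^ p + (N - X x1 ^ p) := by ring
    rw [e, coeff_add]
    have c1 : coeff (Finsupp.single x1 p) (X x1 ^ p : MvPolynomial (Idx 1 nj) k) = 1 := by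
      rw [X_pow_eq_monomial, coeff_monomial, if_pos rfl]
    have c2 : coeff (Finsupp.single x1 p) (N - X x1 ^ p) = 0 := by
      by_contra hne
      have := hNsplit _ (MvPolynomial.mem_support_iff.2 hne)
      simp [Finsupp.single_eq_same] at this
    rw [c1, c2, add_zero]
  -- B equals the degree-filtration submodule
  have hB_eq : B = Stmt6Aux.degLT k x1 p := by
    apply le_antisymm
    · rw [Submodule.span_le]
      rintro g ⟨s, hs, rfl⟩
      exact Stmt6Aux.monomial_mem_degLT _ hs
    · intro f hf
      rw [f.as_sum]
      refine Submodule.sum_mem _ fun s hs => ?_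
      have hm : monomial s (coeff s f) = (coeff s f) • monomial s (1:k) := by
        rw [MvPolynomial.smul_monomial, smul_eq_mul, mul_one]
      rw [hm]
      exact Submodule.smul_mem _ _ (Submodule.subset_span ⟨s, hf s hs, rfl⟩)
  -- σ on a variable
  have hsX : ∀ v : Idx 1 nj, sigmaAct k nj (X v)
      = X v + (if h : (v.2 : ℕ) + 1 < n then (X ⟨v.1, ⟨(v.2 : ℕ) + 1, h⟩⟩ :
          MvPolynomial (Idx 1 nj) k) else 0) := fun v => aeval_X _ v
  have hXw : ∀ v : Idx 1 nj, (if h : (v.2 : ℕ) + 1 < n then (X ⟨v.1, ⟨(v.2 : ℕ) + 1, h⟩⟩ :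
      MvPolynomial (Idx 1 nj) k) else 0) ∈ Stmt6Aux.degLT k x1 1 := by
    intro v
    split_ifs with h
    · refine Stmt6Aux.X_mem_degLT_one ?_
      intro hEq
      simpa using congrArg (fun w : Idx 1 nj => (w.2 : ℕ)) hEq
    · exact Submodule.zero_mem _
  -- stability of N·k[V]
  have hstabNR : ∀ g ∈ NR, sigmaAct k nj g ∈ NR := by
    rintro g ⟨f, rfl⟩
    refine ⟨sigmaAct k nj f, ?_⟩
    simp only [LinearMap.mulLeft_apply]
    rw [map_mul, hσN]
  -- stability of B
  have hstabB : ∀ g ∈ B, sigmaAct k nj g ∈ B := by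
    intro g hg
    refine Submodule.span_induction ?_ ?_ ?_ ?_ hg
    · rintro y ⟨s, hs, rfl⟩
      rw [hB_eq]
      have hm : (monomial s (1:k)) = Finsupp.prod s fun v e => (X v : MvPolynomial (Idx 1 nj) k) ^ e := by
        rw [monomial_eq, C_1, one_mul]
      rw [hm, Finsupp.prod, map_prod]
      simp only [map_pow]
      have key := Stmt6Aux.prod_mem_degLT (v := x1) s.support
          (fun v => (sigmaAct k nj (X v)) ^ (s v))
          (fun v => if v = x1 then s x1 else 0) ?_
      · refine Stmt6Aux.degLT_mono ?_ key
        rw [Finset.sum_ite_eq' s.support x1 (fun _ => s x1)]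
        split_ifs <;> omega
      · intro v hv
        beta_reduce
        by_cases hvx : v = x1
        · subst hvx
          rw [if_pos rfl]
          have h2 : sigmaAct k nj (X x1) ∈ Stmt6Aux.degLT k x1 2 := by
            rw [hsX]
            exact Submodule.add_mem _ Stmt6Aux.X_mem_degLT_two
              (Stmt6Aux.degLT_mono (by omega) (hXw x1))
          simpa using Stmt6Aux.pow_mem_degLT (a := 1) (e := s x1) h2
        · rw [if_neg hvx]
          have h2 : sigmaAct k nj (X v) ∈ Stmt6Aux.degLT k x1 1 := by
            rw [hsX]
            exact Submodule.add_mem _ (Stmt6Aux.X_mem_degLT_one hvx) (hXw v)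
          simpa using Stmt6Aux.pow_mem_degLT (a := 0) (e := s v) h2
    · rw [map_zero]; exact Submodule.zero_mem _
    · intro a b _ _ ha hb; rw [map_add]; exact Submodule.add_mem _ ha hb
    · intro c a _ ha; rw [map_smul]; exact Submodule.smul_mem _ _ ha
  -- generation: every polynomial is in NR ⊔ B
  have main : ∀ d (f : MvPolynomial (Idx 1 nj) k),
      f ∈ Stmt6Aux.degLT k x1 (d+1) → f ∈ NR ⊔ B := by
    intro d
    induction d with
    | zero =>
        intro f hf
        exact Submodule.mem_sup_right (hB_eq ▸ Stmt6Aux.degLT_mono (by omega) hf)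
    | succ d ih =>
        intro f hf
        by_cases hdp : d + 2 ≤ p
        · exact Submodule.mem_sup_right (hB_eq ▸ Stmt6Aux.degLT_mono hdp hf)
        · have hpd : p ≤ d + 1 := by omega
          set c : MvPolynomial (Idx 1 nj) k :=
            ∑ s ∈ f.support, if s x1 = d + 1 then
              monomial (s - Finsupp.single x1 p) (coeff s f) else 0 with hc
          have hkey : f - N * c ∈ Stmt6Aux.degLT k x1 (d+1) := by
            have e1 : f - N * c = (f - X x1 ^ p * c) + (-(N - X x1 ^ p)) * c := by ring
            rw [e1]
            refine Submodule.add_mem _ ?_ ?_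
            · have e2 : X x1 ^ p * c = ∑ s ∈ f.support,
                  if s x1 = d + 1 then monomial s (coeff s f) else 0 := by
                rw [hc, Finset.mul_sum]
                refine Finset.sum_congr rfl fun s hs => ?_
                split_ifs with h
                · rw [X_pow_eq_monomial, monomial_mul, one_mul]
                  congr 1
                  rw [add_tsub_cancel_of_le]
                  exact Finsupp.single_le_iff.2 (by omega)
                · rw [mul_zero]
              have e3 : f - X x1 ^ p * c = ∑ s ∈ f.support,
                  if s x1 = d + 1 then 0 else monomial s (coeff s f) := by
                conv_lhs => rw [f.as_sum, e2]
                rw [← Finset.sum_sub_distrib]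
                refine Finset.sum_congr rfl fun s hs => ?_
                split_ifs with h <;> ring
              rw [e3]
              refine Submodule.sum_mem _ fun s hs => ?_
              split_ifs with h
              · exact Submodule.zero_mem _
              · exact Stmt6Aux.monomial_mem_degLT _ (by have := hf s hs; omega)
            · have hcmem : c ∈ Stmt6Aux.degLT k x1 (d + 1 - p + 1) := by
                rw [hc]
                refine Submodule.sum_mem _ fun s hs => ?_
                split_ifs with h
                · refine Stmt6Aux.monomial_mem_degLT _ ?_
                  rw [Finsupp.tsub_apply, Finsupp.single_eq_same]
                  omega
                · exact Submodule.zero_mem _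
              have := Stmt6Aux.mul_mem_degLT (Submodule.neg_mem _ hNsplit) hcmem
              have he : p + (d + 1 - p) = d + 1 := by omega
              rwa [he] at this
          have hNc : N * c ∈ NR := ⟨c, rfl⟩
          have e4 : f = N * c + (f - N * c) := by ring
          rw [e4]
          exact Submodule.add_mem _ (Submodule.mem_sup_left hNc) (ih _ hkey)
  -- disjointness
  have hdisj : ∀ z, z ∈ NR → z ∈ B → z = 0 := by
    rintro z ⟨f, rfl⟩ hzB
    simp only [LinearMap.mulLeft_apply] at hzB ⊢
    rcases eq_or_ne f 0 with rfl | hf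
    · rw [mul_zero]
    · exfalso
      obtain ⟨s0, hs0mem, hs0⟩ := Finset.exists_mem_eq_sup f.support
        (Finset.nonempty_iff_ne_empty.2 (mt MvPolynomial.support_eq_empty.1 hf)) (fun s => s x1)
      have hcoeff1 : coeff (Finsupp.single x1 p + s0) (X x1 ^ p * f) = coeff s0 f := by
        rw [X_pow_eq_monomial, coeff_monomial_mul, one_mul]
      have hcoeff2 : coeff (Finsupp.single x1 p + s0) ((N - X x1 ^ p) * f) = 0 := by
        rw [MvPolynomial.coeff_mul]
        refine Finset.sum_eq_zero fun ab hab => ?_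
        rcases eq_or_ne (coeff ab.1 (N - X x1 ^ p)) 0 with h1 | h1
        · rw [h1, zero_mul]
        · rcases eq_or_ne (coeff ab.2 f) 0 with h2 | h2
          · rw [h2, mul_zero]
          · exfalso
            have ha := hNsplit _ (MvPolynomial.mem_support_iff.2 h1)
            have hb : ab.2 x1 ≤ f.support.sup (fun s => s x1) :=
              Finset.le_sup (f := fun s => s x1) (MvPolynomial.mem_support_iff.2 h2)
            have hsum := DFunLike.congr_fun (Finset.HasAntidiagonal.mem_antidiagonal.1 hab) x1
            simp only [Finsupp.add_apply, Finsupp.single_eq_same] at hsum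
            omega
      have hNf : coeff (Finsupp.single x1 p + s0) (N * f) = coeff s0 f := by
        have e : N * f = X x1 ^ p * f + (N - X x1 ^ p) * f := by ring
        rw [e, coeff_add, hcoeff1, hcoeff2, add_zero]
      have hmem : (Finsupp.single x1 p + s0) ∈ (N * f).support := by
        rw [MvPolynomial.mem_support_iff, hNf]
        exact MvPolynomial.mem_support_iff.1 hs0mem
      have := (hB_eq ▸ hzB) _ hmem
      simp only [Finsupp.add_apply, Finsupp.single_eq_same] at this
      omega
  refine ⟨hcoeff, ?_, hstabNR, hstabB⟩
  rw [isCompl_iff]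
  constructor
  · rw [Submodule.disjoint_def]
    exact fun z hz1 hz2 => hdisj z hz1 hz2
  · rw [codisjoint_iff, eq_top_iff]
    intro f _
    exact main (f.support.sup fun s => s x1) f
      (fun s hs => Nat.lt_succ_of_le (Finset.le_sup (f := fun s => s x1) hs))
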